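/- Let R be a ring, let N and M be ℤ-indexed chain complexes of R-modules, let (f, g, φ) be a contraction from N to M, and let δ be a perturbation of N that is pointwise nilpotent with respect to φ. Define Σx = Σ_{i≥0} (−1)^i (φδ)^i x, f_δ = f ∘ (id − δ ∘ Σ ∘ φ), and g_δ = Σ ∘ g. Then f_δ ∘ g_δ = id_M. -/
import Mathlib


/-- A contraction between ℤ-graded chain complexes of `R`-modules, presented via total
modules `N` and `M` with internal ℤ-gradings `𝒩`, `ℳ`, differentials `dN`, `dM` of
degree `-1` squaring to zero, chain maps `f : N → M`, `g : M → N` of degree `0`, and a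
homotopy operator `φ : N → N` of degree `+1`, satisfying
`f ∘ g = id`, `g ∘ f + φ ∘ dN + dN ∘ φ = id`, `f ∘ φ = 0`, `φ ∘ g = 0`, `φ ∘ φ = 0`. -/
structure Contraction (R : Type) [Ring R]
    (N : Type) [AddCommGroup N] [Module R N]
    (M : Type) [AddCommGroup M] [Module R M]
    (𝒩 : ℤ → Submodule R N) (ℳ : ℤ → Submodule R M)
    (dN : N →ₗ[R] N) (dM : M →ₗ[R] M)
    (f : N →ₗ[R] M) (g : M →ₗ[R] N) (φ : N →ₗ[R] N) : Prop where
  gradedN : DirectSum.IsInternal 𝒩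
  gradedM : DirectSum.IsInternal ℳ
  dN_deg : ∀ i : ℤ, ∀ x ∈ 𝒩 i, dN x ∈ 𝒩 (i - 1)
  dM_deg : ∀ i : ℤ, ∀ x ∈ ℳ i, dM x ∈ ℳ (i - 1)
  dN_sq : dN ∘ₗ dN = 0
  dM_sq : dM ∘ₗ dM = 0
  f_deg : ∀ i : ℤ, ∀ x ∈ 𝒩 i, f x ∈ ℳ i
  g_deg : ∀ i : ℤ, ∀ x ∈ ℳ i, g x ∈ 𝒩 i
  φ_deg : ∀ i : ℤ, ∀ x ∈ 𝒩 i, φ x ∈ 𝒩 (i + 1)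
  f_chain : dM ∘ₗ f = f ∘ₗ dN
  g_chain : dN ∘ₗ g = g ∘ₗ dM
  fg : f ∘ₗ g = LinearMap.id
  homotopy : g ∘ₗ f + φ ∘ₗ dN + dN ∘ₗ φ = LinearMap.id
  fφ : f ∘ₗ φ = 0
  φg : φ ∘ₗ g = 0
  φφ : φ ∘ₗ φ = 0

/-- The perturbed maps satisfy `f_δ ∘ g_δ = id_M`, where `f_δ = f ∘ (id - δ ∘ S ∘ φ)`
and `g_δ = S ∘ g`. -/
theorem perturbed_fg_eq_id
    (R : Type) [Ring R]
    (N : Type) [AddCommGroup N] [Module R N]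
    (M : Type) [AddCommGroup M] [Module R M]
    (𝒩 : ℤ → Submodule R N) (ℳ : ℤ → Submodule R M)
    (dN : N →ₗ[R] N) (dM : M →ₗ[R] M)
    (f : N →ₗ[R] M) (g : M →ₗ[R] N) (φ : N →ₗ[R] N)
    (hc : Contraction R N M 𝒩 ℳ dN dM f g φ)
    (δ : N →ₗ[R] N)
    (δ_deg : ∀ i : ℤ, ∀ x ∈ 𝒩 i, δ x ∈ 𝒩 (i - 1))
    (δ_pert : (dN + δ) ∘ₗ (dN + δ) = 0)
    (δ_nil : ∀ x : N, ∃ m : ℕ, ((φ ∘ₗ δ) ^ m) x = 0)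
    (S : N →ₗ[R] N)
    (hS : ∀ (x : N) (m : ℕ), ((φ ∘ₗ δ) ^ m) x = 0 →
      S x = ∑ i ∈ Finset.range m, ((-1 : ℤ) ^ i) • (((φ ∘ₗ δ) ^ i) x)) :
    (f ∘ₗ (LinearMap.id - δ ∘ₗ S ∘ₗ φ)) ∘ₗ (S ∘ₗ g) = LinearMap.id := by

  apply LinearMap.ext
  intro x
  obtain ⟨m, hm⟩ := δ_nil (g x)
  have hm' : ((φ ∘ₗ δ) ^ (m + 1)) (g x) = 0 := by
    rw [pow_succ', Module.End.mul_apply, hm, map_zero]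
  have hexp := hS (g x) (m + 1) hm'
  have step : ∀ (k : ℕ) (y : N), ((φ ∘ₗ δ) ^ (k + 1)) y = φ (δ (((φ ∘ₗ δ) ^ k) y)) := by
    intro k y
    rw [pow_succ', Module.End.mul_apply, LinearMap.comp_apply]
  have hφφ : ∀ y : N, φ (φ y) = 0 := fun y => by
    simpa using LinearMap.ext_iff.mp hc.φφ y
  have hfφ : ∀ y : N, f (φ y) = 0 := fun y => by
    simpa using LinearMap.ext_iff.mp hc.fφ y
  have hφg : φ (g x) = 0 := by simpa using LinearMap.ext_iff.mp hc.φg x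
  have hfg : f (g x) = x := by simpa using LinearMap.ext_iff.mp hc.fg x
  have hφS : φ (S (g x)) = 0 := by
    rw [hexp, map_sum]
    apply Finset.sum_eq_zero
    intro i _
    rw [map_zsmul]
    cases i with
    | zero => simp [hφg]
    | succ k => rw [step, hφφ, smul_zero]
  have hfS : f (S (g x)) = x := by
    rw [hexp, map_sum]
    simp only [map_zsmul]
    rw [Finset.sum_range_succ']
    have : ∀ i ∈ Finset.range m,
        ((-1 : ℤ) ^ (i + 1)) • f (((φ ∘ₗ δ) ^ (i + 1)) (g x)) = 0 := by
      intro i _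
      rw [step, hfφ, smul_zero]
    rw [Finset.sum_eq_zero this]
    simp [hfg]
  simp only [LinearMap.comp_apply, LinearMap.sub_apply, LinearMap.id_apply]
  rw [hφS, map_zero, map_zero, sub_zero, hfS]
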